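/- There exist positive constants c_1 and c_2 such that for every integer N ≥ 2 the number R(N) of integer triples (x_1, x_2, x_3) with |x_1| ≤ N, |x_2| ≤ N, |x_3| ≤ N satisfying x_1^2 + x_2^2 − x_3^2 = 0 satisfies c_1·N ≤ R(N) ≤ c_2·N·ln N. -/

import Mathlib

open Finset

/-- The solution set. -/
def pySol (N : ℕ) : Set (Fin 3 → ℤ) :=
  {x : Fin 3 → ℤ | (∀ i, |x i| ≤ (N : ℤ)) ∧ x 0 ^ 2 + x 1 ^ 2 - x 2 ^ 2 = 0}

lemma pySol_finite (N : ℕ) : (pySol N).Finite := by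
  apply Set.Finite.subset (Set.Finite.pi (fun _ : Fin 3 => Set.finite_Icc (-(N:ℤ)) N))
  intro x hx
  simp only [Set.mem_pi, Set.mem_univ, Set.mem_Icc, forall_true_left]
  intro i
  exact abs_le.mp (hx.1 i)

/-- parameter finset -/
def pyQ (N : ℕ) : Finset (ℕ × ℕ × ℕ) :=
  ((Finset.Icc 1 N) ×ˢ (Finset.Icc 1 N) ×ˢ (Finset.Icc 1 N)).filter
    fun t => t.2.2 < t.2.1 ∧ t.1 * (t.2.1 ^ 2 + t.2.2 ^ 2) ≤ N

def pyF : (ℤ × ℤ × ℤ) × Bool × (ℕ × ℕ × ℕ) → (Fin 3 → ℤ) :=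
  fun p =>
    let g : ℤ := p.2.2.1
    let u : ℤ := p.2.2.2.1
    let v : ℤ := p.2.2.2.2
    let A : ℤ := g * (u ^ 2 - v ^ 2)
    let B : ℤ := 2 * g * u * v
    ![p.1.1 * (if p.2.1 then A else B), p.1.2.1 * (if p.2.1 then B else A),
      p.1.2.2 * (g * (u ^ 2 + v ^ 2))]

lemma pyQ_card_le (N : ℕ) : ((pyQ N).card : ℝ) ≤ (N : ℝ) * (1 + Real.log N) := by
  classical
  set UV : Finset (ℕ × ℕ) := (Finset.Icc 1 N ×ˢ Finset.Icc 1 N).filter fun p => p.2 < p.1 with hUV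
  have hfib : (pyQ N).card = ∑ p ∈ UV, ((pyQ N).filter fun t => t.2 = p).card := by
    apply Finset.card_eq_sum_card_fiberwise
    intro t ht
    simp only [pyQ, Finset.mem_coe, Finset.mem_filter, Finset.mem_product] at ht
    simp only [hUV, Finset.mem_coe, Finset.mem_filter, Finset.mem_product]
    exact ⟨⟨ht.1.2.1, ht.1.2.2⟩, ht.2.1⟩
  have hfibcard : ∀ p ∈ UV, ((pyQ N).filter fun t => t.2 = p).card ≤ N / (p.1 ^ 2 + p.2 ^ 2) := by
    intro p hp
    simp only [hUV, Finset.mem_filter, Finset.mem_product, Finset.mem_Icc] at hp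
    have hp1 : 0 < p.1 := hp.1.1.1
    have hpos : 0 < p.1 ^ 2 + p.2 ^ 2 := lt_of_lt_of_le (pow_pos hp1 2) (Nat.le_add_right _ _)
    calc ((pyQ N).filter fun t => t.2 = p).card
        ≤ (Finset.Icc 1 (N / (p.1 ^ 2 + p.2 ^ 2))).card := by
          apply Finset.card_le_card_of_injOn (fun t => t.1)
          · intro t ht
            simp only [pyQ, Finset.mem_coe, Finset.mem_filter, Finset.mem_product, Finset.mem_Icc] at ht ⊢
            refine ⟨ht.1.1.1.1, ?_⟩
            rw [Nat.le_div_iff_mul_le hpos]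
            have := ht.1.2.2
            rw [ht.2] at this
            exact this
          · intro a ha b hb hab
            simp only [Finset.mem_coe, pyQ, Finset.mem_filter] at ha hb
            have : a.2 = b.2 := by rw [ha.2, hb.2]
            exact Prod.ext hab this
      _ = N / (p.1 ^ 2 + p.2 ^ 2) := by rw [Nat.card_Icc, Nat.add_sub_cancel]
  have h1 : ((pyQ N).card : ℝ) ≤ ∑ p ∈ UV, ((N : ℝ) / ((p.1 : ℝ) ^ 2 + (p.2 : ℝ) ^ 2)) := by
    rw [hfib]
    push_cast
    apply Finset.sum_le_sum
    intro p hp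
    calc ((((pyQ N).filter fun t => t.2 = p).card : ℕ) : ℝ)
        ≤ ((N / (p.1 ^ 2 + p.2 ^ 2) : ℕ) : ℝ) := by exact_mod_cast hfibcard p hp
      _ ≤ (N : ℝ) / ((p.1 : ℝ) ^ 2 + (p.2 : ℝ) ^ 2) := by
          have := Nat.cast_div_le (α := ℝ) (m := N) (n := p.1 ^ 2 + p.2 ^ 2)
          push_cast at this
          exact this
  have h2 : ∑ p ∈ UV, ((N : ℝ) / ((p.1 : ℝ) ^ 2 + (p.2 : ℝ) ^ 2))
      ≤ ∑ u ∈ Finset.Icc 1 N, (N : ℝ) / (u : ℝ) := by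
    rw [hUV, Finset.sum_filter, Finset.sum_product]
    apply Finset.sum_le_sum
    intro u hu
    simp only [Finset.mem_Icc] at hu
    have hu1 : (1 : ℝ) ≤ (u : ℝ) := by exact_mod_cast hu.1
    calc ∑ v ∈ Finset.Icc 1 N, (if v < u then (N : ℝ) / ((u : ℝ) ^ 2 + (v : ℝ) ^ 2) else 0)
        ≤ ∑ v ∈ Finset.Icc 1 N, (if v < u then (N : ℝ) / (u : ℝ) ^ 2 else 0) := by
          apply Finset.sum_le_sum
          intro v hv
          split_ifs
          · apply div_le_div_of_nonneg_left (by positivity) (by positivity)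
            nlinarith [sq_nonneg (v : ℝ)]
          · exact le_rfl
      _ = ((Finset.Icc 1 N).filter fun v => v < u).card * ((N : ℝ) / (u : ℝ) ^ 2) := by
          rw [← Finset.sum_filter, Finset.sum_const, nsmul_eq_mul]
      _ ≤ (u : ℝ) * ((N : ℝ) / (u : ℝ) ^ 2) := by
          apply mul_le_mul_of_nonneg_right _ (by positivity)
          have : ((Finset.Icc 1 N).filter fun v => v < u) ⊆ Finset.Ico 1 u := by
            intro v hv
            simp only [Finset.mem_filter, Finset.mem_Icc, Finset.mem_Ico] at hv ⊢
            exact ⟨hv.1.1, hv.2⟩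
          calc (((Finset.Icc 1 N).filter fun v => v < u).card : ℝ)
              ≤ ((Finset.Ico 1 u).card : ℝ) := by exact_mod_cast Finset.card_le_card this
            _ ≤ (u : ℝ) := by rw [Nat.card_Ico]; exact_mod_cast Nat.sub_le u 1
      _ = (N : ℝ) / (u : ℝ) := by field_simp
  have h3 : ∑ u ∈ Finset.Icc 1 N, (N : ℝ) / (u : ℝ) = (N : ℝ) * (harmonic N : ℝ) := by
    have : (harmonic N : ℝ) = ∑ u ∈ Finset.Icc 1 N, ((u : ℝ))⁻¹ := by
      rw [harmonic_eq_sum_Icc]; push_cast; rfl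
    rw [this, Finset.mul_sum]
    exact Finset.sum_congr rfl fun u _ => (div_eq_mul_inv _ _)
  have h4 : (harmonic N : ℝ) ≤ 1 + Real.log N := harmonic_le_one_add_log N
  calc ((pyQ N).card : ℝ) ≤ ∑ p ∈ UV, ((N : ℝ) / ((p.1 : ℝ) ^ 2 + (p.2 : ℝ) ^ 2)) := h1
    _ ≤ ∑ u ∈ Finset.Icc 1 N, (N : ℝ) / (u : ℝ) := h2
    _ = (N : ℝ) * (harmonic N : ℝ) := h3
    _ ≤ (N : ℝ) * (1 + Real.log N) := by
        apply mul_le_mul_of_nonneg_left h4 (Nat.cast_nonneg N)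

lemma py_maxmin (k m n : ℤ) :
    (max |m| |n|) ^ 2 + (min |m| |n|) ^ 2 = m ^ 2 + n ^ 2 ∧
    |k| * ((max |m| |n|) ^ 2 - (min |m| |n|) ^ 2) = |k * (m ^ 2 - n ^ 2)| ∧
    2 * |k| * (max |m| |n|) * (min |m| |n|) = |k * (2 * m * n)| := by
  have habs : ∀ a b : ℤ, |b| ≤ |a| →
      (max |a| |b|) ^ 2 + (min |a| |b|) ^ 2 = a ^ 2 + b ^ 2 ∧
      |k| * ((max |a| |b|) ^ 2 - (min |a| |b|) ^ 2) = |k * (a ^ 2 - b ^ 2)| ∧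
      2 * |k| * (max |a| |b|) * (min |a| |b|) = |k * (2 * a * b)| := by
    intro a b h
    rw [max_eq_left h, min_eq_right h]
    have h2 : b ^ 2 ≤ a ^ 2 := by
      have := mul_self_le_mul_self (abs_nonneg b) h
      rw [abs_mul_abs_self, abs_mul_abs_self] at this
      nlinarith [this]
    refine ⟨by rw [sq_abs, sq_abs], ?_, ?_⟩
    · rw [abs_mul, abs_of_nonneg (by linarith : (0:ℤ) ≤ a ^ 2 - b ^ 2), sq_abs, sq_abs]
    · rw [abs_mul]
      have : |2 * a * b| = 2 * |a| * |b| := by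
        rw [abs_mul, abs_mul, abs_two]
      rw [this]; ring
  rcases le_total |n| |m| with h | h
  · exact habs m n h
  · obtain ⟨h1', h2', h3'⟩ := habs n m h
    rw [max_comm, min_comm] at h1' h2' h3'
    refine ⟨by linarith, ?_, ?_⟩
    · rw [h2']
      have : k * (n ^ 2 - m ^ 2) = -(k * (m ^ 2 - n ^ 2)) := by ring
      rw [this, abs_neg]
    · rw [h3']
      have : k * (2 * n * m) = k * (2 * m * n) := by ring
      rw [this]

def pySigns : Finset (ℤ × ℤ × ℤ) := ({-1, 1} : Finset ℤ) ×ˢ ({-1, 1} : Finset ℤ) ×ˢ ({-1, 1} : Finset ℤ)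

lemma py_surj (N : ℕ) :
    {x ∈ pySol N | x 0 ≠ 0 ∧ x 1 ≠ 0} ⊆
      ↑((pySigns ×ˢ (Finset.univ : Finset Bool) ×ˢ pyQ N).image pyF) := by
  rintro x ⟨⟨hb, heq⟩, h0, h1⟩
  have heq' : x 0 ^ 2 + x 1 ^ 2 = x 2 ^ 2 := by linarith
  have h2 : x 2 ≠ 0 := by
    intro h
    rw [h] at heq'
    have h0' : 0 < x 0 ^ 2 := by positivity
    have h1' : 0 < x 1 ^ 2 := by positivity
    simp at heq'; linarith
  have ht : PythagoreanTriple (x 0) (x 1) (x 2) := by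
    unfold PythagoreanTriple; linear_combination heq'
  obtain ⟨k, m, n, hleg, hz⟩ := PythagoreanTriple.classification.mp ht
  -- |x 2| = |k| * (m² + n²)
  have hnn : (0:ℤ) ≤ m ^ 2 + n ^ 2 := by positivity
  have hc : |k| * (m ^ 2 + n ^ 2) = |x 2| := by
    rcases hz with h | h
    · rw [h, abs_mul, abs_of_nonneg hnn]
    · rw [h]
      have : -k * (m ^ 2 + n ^ 2) = -(k * (m ^ 2 + n ^ 2)) := by ring
      rw [this, abs_neg, abs_mul, abs_of_nonneg hnn]
  obtain ⟨hI1, hI2, hI3⟩ := py_maxmin k m n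
  -- nonvanishing
  have hk : k ≠ 0 := by
    intro h; rw [h] at hc; simp at hc; exact h2 (abs_eq_zero.mp hc.symm)
  have hm0 : m ≠ 0 ∧ n ≠ 0 ∧ m ^ 2 ≠ n ^ 2 := by
    rcases hleg with ⟨ha, hb'⟩ | ⟨ha, hb'⟩
    · refine ⟨?_, ?_, ?_⟩
      · intro h; apply h1; rw [hb', h]; ring
      · intro h; apply h1; rw [hb', h]; ring
      · intro h; apply h0; rw [ha, h]; ring
    · refine ⟨?_, ?_, ?_⟩
      · intro h; apply h0; rw [ha, h]; ring
      · intro h; apply h0; rw [ha, h]; ring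
      · intro h; apply h1; rw [hb', h]; ring
  set g : ℕ := k.natAbs with hg
  set U : ℕ := max m.natAbs n.natAbs with hUdef
  set V : ℕ := min m.natAbs n.natAbs with hVdef
  have hgZ : (g : ℤ) = |k| := (Int.abs_eq_natAbs k).symm
  have hUZ : (U : ℤ) = max |m| |n| := by
    rw [hUdef, Nat.cast_max, Int.abs_eq_natAbs, Int.abs_eq_natAbs]
  have hVZ : (V : ℤ) = min |m| |n| := by
    rw [hVdef, Nat.cast_min, Int.abs_eq_natAbs, Int.abs_eq_natAbs]
  -- key absolute-value identities in ℤ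
  have key2 : (g : ℤ) * ((U : ℤ) ^ 2 - (V : ℤ) ^ 2) = |k * (m ^ 2 - n ^ 2)| := by
    rw [hgZ, hUZ, hVZ]; exact hI2
  have key3 : 2 * (g : ℤ) * (U : ℤ) * (V : ℤ) = |k * (2 * m * n)| := by
    rw [hgZ, hUZ, hVZ]; exact hI3
  have keyc : (g : ℤ) * ((U : ℤ) ^ 2 + (V : ℤ) ^ 2) = |x 2| := by
    rw [hgZ, hUZ, hVZ, hI1]; exact hc
  -- membership data
  have hg1 : 1 ≤ g := Int.natAbs_pos.mpr hk
  have hV1 : 1 ≤ V := by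
    rw [hVdef]
    exact le_min (Int.natAbs_pos.mpr hm0.1) (Int.natAbs_pos.mpr hm0.2.1)
  have hUV : V < U := by
    rcases lt_or_eq_of_le (min_le_max : V ≤ U) with h | h
    · exact h
    · exfalso
      apply hm0.2.2
      have : |m| = |n| := by
        have h' : (V : ℤ) = (U : ℤ) := by exact_mod_cast h
        rw [hUZ, hVZ] at h'
        rcases le_total |m| |n| with hh | hh
        · rw [max_eq_right hh, min_eq_left hh] at h'; linarith
        · rw [max_eq_left hh, min_eq_right hh] at h'; linarith
      rw [← sq_abs m, ← sq_abs n, this]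
  have hcN : (g : ℤ) * ((U : ℤ) ^ 2 + (V : ℤ) ^ 2) ≤ N := by rw [keyc]; exact hb 2
  have hgUV : g * (U ^ 2 + V ^ 2) ≤ N := by exact_mod_cast hcN
  have hU1 : 1 ≤ U := le_trans hV1 (le_of_lt hUV)
  have hsum1 : 1 ≤ U ^ 2 + V ^ 2 := le_trans (Nat.one_le_iff_ne_zero.mpr (by positivity)) le_rfl
  have hUU : U ^ 2 + V ^ 2 ≤ N := by
    calc U ^ 2 + V ^ 2 = 1 * (U ^ 2 + V ^ 2) := (one_mul _).symm
      _ ≤ g * (U ^ 2 + V ^ 2) := Nat.mul_le_mul_right _ hg1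
      _ ≤ N := hgUV
  have hgN : g ≤ N := by
    calc g = g * 1 := (mul_one g).symm
      _ ≤ g * (U ^ 2 + V ^ 2) := Nat.mul_le_mul_left g hsum1
      _ ≤ N := hgUV
  have hUN : U ≤ N := by
    calc U ≤ U ^ 2 := by nlinarith
      _ ≤ N := le_trans (Nat.le_add_right _ _) hUU
  have hVN : V ≤ N := le_trans (le_trans (min_le_max) hUN) le_rfl
  have hQ : (g, U, V) ∈ pyQ N := by
    simp only [pyQ, Finset.mem_filter, Finset.mem_product, Finset.mem_Icc]
    exact ⟨⟨⟨hg1, hgN⟩, ⟨hU1, hUN⟩, ⟨hV1, hVN⟩⟩, hUV, hgUV⟩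
  -- signs
  set s : Fin 3 → ℤ := fun i => if 0 ≤ x i then 1 else -1 with hs
  have hsgn : ∀ i, s i * |x i| = x i := by
    intro i
    by_cases h : 0 ≤ x i
    · simp [hs, h, abs_of_nonneg h]
    · simp [hs, h, abs_of_neg (lt_of_not_ge h)]
  have hsmem : ∀ i, s i ∈ ({-1, 1} : Finset ℤ) := by
    intro i; by_cases h : 0 ≤ x i <;> simp [hs, h]
  -- choose ε and conclude
  rcases hleg with ⟨ha, hb'⟩ | ⟨ha, hb'⟩
  · -- x 0 = k(m²-n²), x 1 = k·2mn ; use ε = true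
    refine Finset.mem_coe.mpr (Finset.mem_image.mpr ⟨((s 0, s 1, s 2), true, (g, U, V)), ?_, ?_⟩)
    · simp only [Finset.mem_product, Finset.mem_univ, pySigns]
      exact ⟨⟨hsmem 0, hsmem 1, hsmem 2⟩, trivial, hQ⟩
    · funext i
      have e0 : (g : ℤ) * ((U : ℤ) ^ 2 - (V : ℤ) ^ 2) = |x 0| := by rw [key2, ← ha]
      have e1 : 2 * (g : ℤ) * (U : ℤ) * (V : ℤ) = |x 1| := by
        rw [key3, ← hb']
      fin_cases i
      · show s 0 * ((g:ℤ) * ((U:ℤ) ^ 2 - (V:ℤ) ^ 2)) = x 0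
        rw [e0]; exact hsgn 0
      · show s 1 * (2 * (g:ℤ) * (U:ℤ) * (V:ℤ)) = x 1
        rw [e1]; exact hsgn 1
      · show s 2 * ((g:ℤ) * ((U:ℤ) ^ 2 + (V:ℤ) ^ 2)) = x 2
        rw [keyc]; exact hsgn 2
  · -- x 0 = k·2mn, x 1 = k(m²-n²) ; use ε = false
    refine Finset.mem_coe.mpr (Finset.mem_image.mpr ⟨((s 0, s 1, s 2), false, (g, U, V)), ?_, ?_⟩)
    · simp only [Finset.mem_product, Finset.mem_univ, pySigns]
      exact ⟨⟨hsmem 0, hsmem 1, hsmem 2⟩, trivial, hQ⟩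
    · funext i
      have e0 : 2 * (g : ℤ) * (U : ℤ) * (V : ℤ) = |x 0| := by rw [key3, ← ha]
      have e1 : (g : ℤ) * ((U : ℤ) ^ 2 - (V : ℤ) ^ 2) = |x 1| := by rw [key2, ← hb']
      fin_cases i
      · show s 0 * (2 * (g:ℤ) * (U:ℤ) * (V:ℤ)) = x 0
        rw [e0]; exact hsgn 0
      · show s 1 * ((g:ℤ) * ((U:ℤ) ^ 2 - (V:ℤ) ^ 2)) = x 1
        rw [e1]; exact hsgn 1
      · show s 2 * ((g:ℤ) * ((U:ℤ) ^ 2 + (V:ℤ) ^ 2)) = x 2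
        rw [keyc]; exact hsgn 2

def pyE0 : ℤ × Bool → (Fin 3 → ℤ) := fun p => ![0, p.1, if p.2 then p.1 else -p.1]
def pyE1 : ℤ × Bool → (Fin 3 → ℤ) := fun p => ![p.1, 0, if p.2 then p.1 else -p.1]

lemma py_bd0 (N : ℕ) :
    {x ∈ pySol N | x 0 = 0} ⊆
      ↑((Finset.Icc (-(N : ℤ)) N ×ˢ (Finset.univ : Finset Bool)).image pyE0) := by
  rintro x ⟨⟨hb, heq⟩, h0⟩
  have h : (x 2 - x 1) * (x 2 + x 1) = 0 := by linear_combination -heq + x 0 * h0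
  have hmem : x 1 ∈ Finset.Icc (-(N : ℤ)) N := by
    rw [Finset.mem_Icc]; exact abs_le.mp (hb 1)
  rcases mul_eq_zero.mp h with h' | h'
  · refine Finset.mem_coe.mpr (Finset.mem_image.mpr ⟨(x 1, true), ?_, ?_⟩)
    · simp only [Finset.mem_product, Finset.mem_univ, and_true]; exact hmem
    · funext i; fin_cases i
      · exact h0.symm
      · rfl
      · show x 1 = x 2; linarith
  · refine Finset.mem_coe.mpr (Finset.mem_image.mpr ⟨(x 1, false), ?_, ?_⟩)
    · simp only [Finset.mem_product, Finset.mem_univ, and_true]; exact hmem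
    · funext i; fin_cases i
      · exact h0.symm
      · rfl
      · show -x 1 = x 2; linarith

lemma py_bd1 (N : ℕ) :
    {x ∈ pySol N | x 1 = 0} ⊆
      ↑((Finset.Icc (-(N : ℤ)) N ×ˢ (Finset.univ : Finset Bool)).image pyE1) := by
  rintro x ⟨⟨hb, heq⟩, h1⟩
  have h : (x 2 - x 0) * (x 2 + x 0) = 0 := by linear_combination -heq + x 1 * h1
  have hmem : x 0 ∈ Finset.Icc (-(N : ℤ)) N := by
    rw [Finset.mem_Icc]; exact abs_le.mp (hb 0)
  rcases mul_eq_zero.mp h with h' | h'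
  · refine Finset.mem_coe.mpr (Finset.mem_image.mpr ⟨(x 0, true), ?_, ?_⟩)
    · simp only [Finset.mem_product, Finset.mem_univ, and_true]; exact hmem
    · funext i; fin_cases i
      · rfl
      · exact h1.symm
      · show x 0 = x 2; linarith
  · refine Finset.mem_coe.mpr (Finset.mem_image.mpr ⟨(x 0, false), ?_, ?_⟩)
    · simp only [Finset.mem_product, Finset.mem_univ, and_true]; exact hmem
    · funext i; fin_cases i
      · rfl
      · exact h1.symm
      · show -x 0 = x 2; linarith

lemma py_card_Icc (N : ℕ) : (Finset.Icc (-(N : ℤ)) N).card = 2 * N + 1 := by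
  rw [Int.card_Icc]; omega

lemma py_lower (N : ℕ) (hN : 2 ≤ N) : (N : ℝ) ≤ ((pySol N).ncard : ℝ) := by
  classical
  set f : ℤ → (Fin 3 → ℤ) := fun a => ![0, a, a] with hf
  have hinj : Function.Injective f := by
    intro a b h
    have := congrFun h 1
    simpa [hf] using this
  have hsub : ↑((Finset.Icc (-(N : ℤ)) N).image f) ⊆ pySol N := by
    intro x hx
    obtain ⟨a, ha, rfl⟩ := Finset.mem_image.mp (Finset.mem_coe.mp hx)
    rw [Finset.mem_Icc] at ha
    constructor
    · intro i; fin_cases i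
      · show |(0:ℤ)| ≤ (N:ℤ); simp
      · show |a| ≤ (N:ℤ); exact abs_le.mpr ⟨ha.1, ha.2⟩
      · show |a| ≤ (N:ℤ); exact abs_le.mpr ⟨ha.1, ha.2⟩
    · show (0:ℤ) ^ 2 + a ^ 2 - a ^ 2 = 0; ring
  have h1 : ((Finset.Icc (-(N : ℤ)) N).image f).card ≤ (pySol N).ncard := by
    rw [← Set.ncard_coe_finset]
    exact Set.ncard_le_ncard hsub (pySol_finite N)
  have h2 : ((Finset.Icc (-(N : ℤ)) N).image f).card = 2 * N + 1 := by
    rw [Finset.card_image_of_injective _ hinj, py_card_Icc]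
  have : N ≤ (pySol N).ncard := by omega
  exact_mod_cast this

lemma py_upper (N : ℕ) (hN : 2 ≤ N) :
    ((pySol N).ncard : ℝ) ≤ 100 * (N : ℝ) * Real.log N := by
  classical
  have hfin := pySol_finite N
  set A0 := {x ∈ pySol N | x 0 = 0} with hA0
  set A1 := {x ∈ pySol N | x 1 = 0} with hA1
  set B := {x ∈ pySol N | x 0 ≠ 0 ∧ x 1 ≠ 0} with hB
  have hA0fin : A0.Finite := hfin.subset (Set.sep_subset _ _)
  have hA1fin : A1.Finite := hfin.subset (Set.sep_subset _ _)
  have hBfin : B.Finite := hfin.subset (Set.sep_subset _ _)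
  have hsub : pySol N ⊆ A0 ∪ A1 ∪ B := by
    intro x hx
    by_cases h0 : x 0 = 0
    · exact Or.inl (Or.inl ⟨hx, h0⟩)
    by_cases h1 : x 1 = 0
    · exact Or.inl (Or.inr ⟨hx, h1⟩)
    · exact Or.inr ⟨hx, h0, h1⟩
  have hcard : (pySol N).ncard ≤ A0.ncard + A1.ncard + B.ncard := by
    calc (pySol N).ncard ≤ (A0 ∪ A1 ∪ B).ncard :=
          Set.ncard_le_ncard hsub (((hA0fin.union hA1fin).union hBfin))
      _ ≤ (A0 ∪ A1).ncard + B.ncard := Set.ncard_union_le _ _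
      _ ≤ A0.ncard + A1.ncard + B.ncard := by
          have := Set.ncard_union_le A0 A1
          omega
  have hbd0 : A0.ncard ≤ (2 * N + 1) * 2 := by
    calc A0.ncard ≤ ((Finset.Icc (-(N : ℤ)) N ×ˢ (Finset.univ : Finset Bool)).image pyE0).card := by
          rw [← Set.ncard_coe_finset]
          exact Set.ncard_le_ncard (py_bd0 N) (Finset.finite_toSet _)
      _ ≤ (Finset.Icc (-(N : ℤ)) N ×ˢ (Finset.univ : Finset Bool)).card := Finset.card_image_le
      _ = (2 * N + 1) * 2 := by rw [Finset.card_product, py_card_Icc]; simp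
  have hbd1 : A1.ncard ≤ (2 * N + 1) * 2 := by
    calc A1.ncard ≤ ((Finset.Icc (-(N : ℤ)) N ×ˢ (Finset.univ : Finset Bool)).image pyE1).card := by
          rw [← Set.ncard_coe_finset]
          exact Set.ncard_le_ncard (py_bd1 N) (Finset.finite_toSet _)
      _ ≤ (Finset.Icc (-(N : ℤ)) N ×ˢ (Finset.univ : Finset Bool)).card := Finset.card_image_le
      _ = (2 * N + 1) * 2 := by rw [Finset.card_product, py_card_Icc]; simp
  have hbdB : B.ncard ≤ 16 * (pyQ N).card := by
    calc B.ncard ≤ ((pySigns ×ˢ (Finset.univ : Finset Bool) ×ˢ pyQ N).image pyF).card := by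
          rw [← Set.ncard_coe_finset]
          exact Set.ncard_le_ncard (py_surj N) (Finset.finite_toSet _)
      _ ≤ (pySigns ×ˢ (Finset.univ : Finset Bool) ×ˢ pyQ N).card := Finset.card_image_le
      _ = 16 * (pyQ N).card := by
          rw [Finset.card_product, Finset.card_product]
          have : pySigns.card = 8 := rfl
          rw [this]
          simp [Finset.card_univ]
          ring
  have hQ : ((pyQ N).card : ℝ) ≤ (N : ℝ) * (1 + Real.log N) := pyQ_card_le N
  have hN2 : (2 : ℝ) ≤ (N : ℝ) := by exact_mod_cast hN
  have hlog2 : (0.6931471803 : ℝ) < Real.log 2 := Real.log_two_gt_d9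
  have hlogmono : Real.log 2 ≤ Real.log N := Real.log_le_log (by norm_num) hN2
  have hL : (0.6931471803 : ℝ) ≤ Real.log N := le_trans (le_of_lt hlog2) hlogmono
  have hcast : ((pySol N).ncard : ℝ) ≤ ((2 * N + 1) * 2 : ℕ) + ((2 * N + 1) * 2 : ℕ)
      + 16 * ((pyQ N).card : ℝ) := by
    have h := hcard
    have h16 : (B.ncard : ℝ) ≤ 16 * ((pyQ N).card : ℝ) := by exact_mod_cast hbdB
    have h0' : (A0.ncard : ℝ) ≤ (((2 * N + 1) * 2 : ℕ) : ℝ) := by exact_mod_cast hbd0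
    have h1' : (A1.ncard : ℝ) ≤ (((2 * N + 1) * 2 : ℕ) : ℝ) := by exact_mod_cast hbd1
    have hc : ((pySol N).ncard : ℝ) ≤ (A0.ncard : ℝ) + A1.ncard + B.ncard := by exact_mod_cast h
    linarith
  have : ((pySol N).ncard : ℝ) ≤ (8 * (N : ℝ) + 4) + 16 * ((N : ℝ) * (1 + Real.log N)) := by
    push_cast at hcast
    linarith
  nlinarith [this, mul_le_mul_of_nonneg_left hL (by linarith : (0:ℝ) ≤ (N:ℝ)), hN2, hL]

/-- There are positive constants `c_1, c_2` such that for every integer `N ≥ 2` the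
number `R(N)` of integer triples `(x_1, x_2, x_3)` in the cube `[-N, N]^3` with
`x_1^2 + x_2^2 - x_3^2 = 0` satisfies `c_1 N ≤ R(N) ≤ c_2 N ln N`. -/
theorem stmt_19 :
    ∃ c₁ c₂ : ℝ, 0 < c₁ ∧ 0 < c₂ ∧ ∀ N : ℕ, 2 ≤ N →
      c₁ * (N : ℝ) ≤
        (Set.ncard {x : Fin 3 → ℤ |
          (∀ i, |x i| ≤ (N : ℤ)) ∧ x 0 ^ 2 + x 1 ^ 2 - x 2 ^ 2 = 0} : ℝ) ∧
      (Set.ncard {x : Fin 3 → ℤ |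
          (∀ i, |x i| ≤ (N : ℤ)) ∧ x 0 ^ 2 + x 1 ^ 2 - x 2 ^ 2 = 0} : ℝ)
        ≤ c₂ * (N : ℝ) * Real.log (N : ℝ) := by
  refine ⟨1, 100, one_pos, by norm_num, fun N hN => ⟨?_, ?_⟩⟩
  · rw [one_mul]
    exact py_lower N hN
  · exact py_upper N hN
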